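/- Let f : ℝⁿ → ℝ be twice continuously differentiable and let x* > 0 componentwise satisfy ∇f(x*) = 0 and ∇²f(x*) positive definite. Then there exist μ̄ > 0 and a continuously differentiable function x : (0, μ̄) → ℝⁿ such that for every μ ∈ (0, μ̄): x(μ) > 0 componentwise, ∇B_μ(x(μ)) = 0, x(μ) is an unconstrained local minimizer of B_μ, and lim_{μ→0⁺} x(μ) = x*. -/

import Mathlib

open Set Filter Topology

section Aux
open InnerProductSpace

variable {n : ℕ}

/-- componentwise inverse on Euclidean space -/
noncomputable def invVec (x : EuclideanSpace ℝ (Fin n)) : EuclideanSpace ℝ (Fin n) :=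
  WithLp.toLp 2 fun i => (x i)⁻¹

lemma invVec_contDiffAt (x : EuclideanSpace ℝ (Fin n)) (hx : ∀ i, x i ≠ 0) :
    ContDiffAt ℝ 1 (invVec (n := n)) x := by
  rw [contDiffAt_piLp]
  intro i
  exact ContDiffAt.inv ((EuclideanSpace.proj (𝕜 := ℝ) i).contDiff.contDiffAt (x := x)) (hx i)

lemma barrier_hasFDerivAt (f : EuclideanSpace ℝ (Fin n) → ℝ) (μ : ℝ)
    (y : EuclideanSpace ℝ (Fin n)) (hfd : DifferentiableAt ℝ f y) (hy : ∀ i, y i ≠ 0) :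
    HasFDerivAt (fun x : EuclideanSpace ℝ (Fin n) => f x - μ * ∑ i, Real.log (x i))
      (fderiv ℝ f y - μ • ∑ i, (y i)⁻¹ •
        (EuclideanSpace.proj i : EuclideanSpace ℝ (Fin n) →L[ℝ] ℝ)) y := by
  have hlog : ∀ i : Fin n, HasFDerivAt (fun x : EuclideanSpace ℝ (Fin n) => Real.log (x i))
      ((y i)⁻¹ • (EuclideanSpace.proj i : EuclideanSpace ℝ (Fin n) →L[ℝ] ℝ)) y := fun i => by
    have h := (Real.hasDerivAt_log (hy i)).comp_hasFDerivAt y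
      ((EuclideanSpace.proj (𝕜 := ℝ) i).hasFDerivAt (x := y))
    exact h.congr_of_eventuallyEq (by filter_upwards with x; rfl)
  have hsum := HasFDerivAt.fun_sum (fun i (_ : i ∈ Finset.univ) => hlog i)
  exact hfd.hasFDerivAt.sub (hsum.const_mul μ)

lemma toDual_sum (y : EuclideanSpace ℝ (Fin n)) :
    toDual ℝ (EuclideanSpace ℝ (Fin n)) (invVec y)
      = ∑ i, (y i)⁻¹ • (EuclideanSpace.proj i : EuclideanSpace ℝ (Fin n) →L[ℝ] ℝ) := by
  ext v
  simp [toDual_apply_apply, PiLp.inner_apply, invVec, mul_comm]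

lemma gradient_barrier (f : EuclideanSpace ℝ (Fin n) → ℝ) (μ : ℝ)
    (y : EuclideanSpace ℝ (Fin n)) (hfd : DifferentiableAt ℝ f y) (hy : ∀ i, y i ≠ 0) :
    gradient (fun x : EuclideanSpace ℝ (Fin n) => f x - μ * ∑ i, Real.log (x i)) y
      = gradient f y - μ • invVec y := by
  rw [gradient, (barrier_hasFDerivAt f μ y hfd hy).fderiv]
  rw [show fderiv ℝ f y - μ • ∑ i, (y i)⁻¹ •
        (EuclideanSpace.proj i : EuclideanSpace ℝ (Fin n) →L[ℝ] ℝ)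
      = fderiv ℝ f y - μ • toDual ℝ _ (invVec y) by rw [toDual_sum]]
  simp only [map_sub, map_smulₛₗ, starRingEnd_apply, star_trivial,
    LinearIsometryEquiv.symm_apply_apply]
  rfl

lemma exists_coercive (f : EuclideanSpace ℝ (Fin n) → ℝ) (xstar : EuclideanSpace ℝ (Fin n))
    (hhess : ∀ p : EuclideanSpace ℝ (Fin n), p ≠ 0 →
      0 < iteratedFDeriv ℝ 2 f xstar ![p, p]) :
    ∃ c > 0, ∀ p : EuclideanSpace ℝ (Fin n),
      c * ‖p‖ ^ 2 ≤ fderiv ℝ (fderiv ℝ f) xstar p p := by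
  set H0 := fderiv ℝ (fderiv ℝ f) xstar with hH0
  have hQpos : ∀ p : EuclideanSpace ℝ (Fin n), p ≠ 0 → 0 < H0 p p := by
    intro p hp
    have := hhess p hp
    rwa [iteratedFDeriv_two_apply, show (![p,p] : Fin 2 → _) 0 = p from rfl,
      show (![p,p] : Fin 2 → _) 1 = p from rfl] at this
  have hQcont : Continuous fun p : EuclideanSpace ℝ (Fin n) => H0 p p :=
    H0.continuous.clm_apply continuous_id
  cases isEmpty_or_nonempty (Fin n) with
  | inl h =>
    refine ⟨1, one_pos, fun p => ?_⟩
    have hp : p = 0 := by ext i; exact (IsEmpty.false i).elim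
    simp [hp]
  | inr h =>
    have hnt : Nontrivial (EuclideanSpace ℝ (Fin n)) := inferInstance
    obtain ⟨p₀, hp₀mem, hp₀min⟩ :=
      (isCompact_sphere (0 : EuclideanSpace ℝ (Fin n)) 1).exists_isMinOn
      (NormedSpace.sphere_nonempty.mpr zero_le_one) hQcont.continuousOn
    have hp₀norm : ‖p₀‖ = 1 := by simpa using hp₀mem
    have hp₀ne : p₀ ≠ 0 := by intro hh; rw [hh] at hp₀norm; simp at hp₀norm
    refine ⟨H0 p₀ p₀, hQpos p₀ hp₀ne, fun p => ?_⟩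
    rcases eq_or_ne p 0 with hp | hp
    · simp [hp]
    · have hpn : ‖p‖ ≠ 0 := norm_ne_zero_iff.mpr hp
      set u := ‖p‖⁻¹ • p with hu
      have hun : u ∈ Metric.sphere (0 : EuclideanSpace ℝ (Fin n)) 1 := by
        simp [hu, norm_smul, abs_of_nonneg (inv_nonneg.mpr (norm_nonneg p)),
          inv_mul_cancel₀ hpn]
      have hkey : H0 p p = ‖p‖ ^ 2 * (H0 u u) := by
        have hpu : p = ‖p‖ • u := by
          rw [hu, smul_smul, mul_inv_cancel₀ hpn, one_smul]
        conv_lhs => rw [hpu]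
        simp [map_smul]
        ring
      rw [hkey]
      have := hp₀min hun
      have h2 : (0:ℝ) ≤ ‖p‖ ^ 2 := sq_nonneg _
      calc H0 p₀ p₀ * ‖p‖ ^ 2 ≤ H0 u u * ‖p‖ ^ 2 := by
            exact mul_le_mul_of_nonneg_right this h2
        _ = ‖p‖ ^ 2 * H0 u u := by ring

set_option maxHeartbeats 1000000 in
lemma exists_psd_ball (f : EuclideanSpace ℝ (Fin n) → ℝ) (hf : ContDiff ℝ 2 f)
    (xstar : EuclideanSpace ℝ (Fin n)) (hxstar : ∀ i, 0 < xstar i)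
    (hc : ∃ c > 0, ∀ p : EuclideanSpace ℝ (Fin n),
      c * ‖p‖ ^ 2 ≤ fderiv ℝ (fderiv ℝ f) xstar p p) :
    ∃ r > 0, ∀ y ∈ Metric.ball xstar r,
      (∀ i, 0 < y i) ∧ ∀ v : EuclideanSpace ℝ (Fin n), 0 ≤ fderiv ℝ (fderiv ℝ f) y v v := by
  obtain ⟨c, hcpos, hcle⟩ := hc
  have hHcont : Continuous (fderiv ℝ (fderiv ℝ f)) :=
    (hf.fderiv_right (m := 1) (by norm_num)).continuous_fderiv one_ne_zero
  have h1 : ∀ᶠ y in 𝓝 xstar,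
      dist (fderiv ℝ (fderiv ℝ f) y) (fderiv ℝ (fderiv ℝ f) xstar) < c/2 :=
    Metric.tendsto_nhds.mp (hHcont.tendsto xstar) (c/2) (half_pos hcpos)
  have hP : ∀ᶠ y in 𝓝 xstar, ∀ i, 0 < y i := by
    rw [eventually_all]
    intro i
    have ht : Tendsto (fun y : EuclideanSpace ℝ (Fin n) => y i) (𝓝 xstar) (𝓝 (xstar i)) := by
      have := (EuclideanSpace.proj (𝕜 := ℝ) i).continuous.tendsto xstar
      simpa using this
    exact ht.eventually (eventually_gt_nhds (hxstar i))
  obtain ⟨r, hrpos, hr⟩ := Metric.eventually_nhds_iff.mp (h1.and hP)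
  refine ⟨r, hrpos, fun y hy => ?_⟩
  obtain ⟨hdist, hpos⟩ := hr (Metric.mem_ball.mp hy)
  refine ⟨hpos, fun v => ?_⟩
  set H := fderiv ℝ (fderiv ℝ f) with hH
  have hsplit : H y v v = H xstar v v + ((H y - H xstar) v) v := by
    simp
  have habs : |((H y - H xstar) v) v| ≤ c/2 * (‖v‖ * ‖v‖) := by
    have h1' : ‖((H y - H xstar) v) v‖ ≤ ‖(H y - H xstar) v‖ * ‖v‖ :=
      ContinuousLinearMap.le_opNorm _ _
    have h2' : ‖(H y - H xstar) v‖ ≤ ‖H y - H xstar‖ * ‖v‖ :=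
      ContinuousLinearMap.le_opNorm _ _
    have h3' : ‖H y - H xstar‖ < c/2 := lt_of_eq_of_lt (dist_eq_norm (H y) (H xstar)).symm hdist
    have hv := norm_nonneg v
    calc |((H y - H xstar) v) v| = ‖((H y - H xstar) v) v‖ := (Real.norm_eq_abs _).symm
      _ ≤ ‖(H y - H xstar) v‖ * ‖v‖ := h1'
      _ ≤ (‖H y - H xstar‖ * ‖v‖) * ‖v‖ := by nlinarith [norm_nonneg ((H y - H xstar) v)]
      _ ≤ c/2 * (‖v‖ * ‖v‖) := by nlinarith
  have hlow := hcle v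
  have hnv : ‖v‖ ^ 2 = ‖v‖ * ‖v‖ := sq (‖v‖) ▸ by ring
  rw [hsplit]
  have := abs_le.mp habs
  nlinarith [this.1, this.2]

set_option maxHeartbeats 1000000 in
lemma isMinOn_barrier (f : EuclideanSpace ℝ (Fin n) → ℝ) (hf : ContDiff ℝ 2 f)
    (μ : ℝ) (hμ : 0 ≤ μ) (s : Set (EuclideanSpace ℝ (Fin n))) (hs : Convex ℝ s)
    (hpos : ∀ y ∈ s, ∀ i, 0 < y i)
    (hpsd : ∀ y ∈ s, ∀ v : EuclideanSpace ℝ (Fin n), 0 ≤ fderiv ℝ (fderiv ℝ f) y v v)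
    (y₀ : EuclideanSpace ℝ (Fin n)) (hy₀ : y₀ ∈ s)
    (hcrit : gradient f y₀ = μ • invVec y₀) :
    IsMinOn (fun x => f x - μ * ∑ i, Real.log (x i)) s y₀ := by
  rw [isMinOn_iff]
  intro y hy
  set v : EuclideanSpace ℝ (Fin n) := y - y₀ with hv
  set γ : ℝ → EuclideanSpace ℝ (Fin n) := fun t => y₀ + t • v with hγ
  have hγs : ∀ t ∈ Icc (0:ℝ) 1, γ t ∈ s := fun t ht => hs.add_smul_sub_mem hy₀ hy ht
  have hγ0 : γ 0 = y₀ := by simp [hγ]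
  have hγ1 : γ 1 = y := by simp [hγ, hv]
  have hγd : ∀ t : ℝ, HasDerivAt γ v t := by
    intro t
    have := ((hasDerivAt_id t).smul_const v).const_add y₀
    simpa [hγ] using this
  have hγi : ∀ (t : ℝ) (i : Fin n), HasDerivAt (fun t => γ t i) (v i) t := by
    intro t i
    have h := (EuclideanSpace.proj (𝕜 := ℝ) i).hasFDerivAt.comp_hasDerivAt t (hγd t)
    have h2 := h.congr_of_eventuallyEq (Filter.Eventually.of_forall fun t => rfl)
    exact h2
  have hne : ∀ t ∈ Icc (0:ℝ) 1, ∀ i, γ t i ≠ 0 := fun t ht i => (hpos _ (hγs t ht) i).ne'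
  set ψ : ℝ → ℝ := fun t => f (γ t) - μ * ∑ i, Real.log (γ t i) with hψdef
  set ψ' : ℝ → ℝ := fun t => fderiv ℝ f (γ t) v - μ * ∑ i, (γ t i)⁻¹ * v i with hψ'def
  set ψ'' : ℝ → ℝ :=
    fun t => fderiv ℝ (fderiv ℝ f) (γ t) v v - μ * ∑ i, -v i / γ t i ^ 2 * v i with hψ''def
  have hfdiff : Differentiable ℝ f := hf.differentiable (by norm_num)
  have hf'diff : Differentiable ℝ (fderiv ℝ f) :=
    (hf.fderiv_right (m := 1) (by norm_num)).differentiable one_ne_zero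
  have hψd : ∀ t ∈ Icc (0:ℝ) 1, HasDerivAt ψ (ψ' t) t := by
    intro t ht
    have h1 : HasDerivAt (fun t => f (γ t)) (fderiv ℝ f (γ t) v) t :=
      (hfdiff (γ t)).hasFDerivAt.comp_hasDerivAt t (hγd t)
    have h2 : ∀ i : Fin n, HasDerivAt (fun t => Real.log (γ t i)) ((γ t i)⁻¹ * v i) t :=
      fun i => by have := (Real.hasDerivAt_log (hne t ht i)).comp t (hγi t i); exact this
    have h3 := HasDerivAt.fun_sum (fun i (_ : i ∈ Finset.univ) => h2 i)
    exact h1.sub (h3.const_mul μ)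
  have hψ'd : ∀ t ∈ Icc (0:ℝ) 1, HasDerivAt ψ' (ψ'' t) t := by
    intro t ht
    have h1 : HasDerivAt (fun t => fderiv ℝ f (γ t)) (fderiv ℝ (fderiv ℝ f) (γ t) v) t :=
      (hf'diff (γ t)).hasFDerivAt.comp_hasDerivAt t (hγd t)
    have h1' : HasDerivAt (fun t => fderiv ℝ f (γ t) v) (fderiv ℝ (fderiv ℝ f) (γ t) v v) t :=
      (ContinuousLinearMap.apply ℝ ℝ v).hasFDerivAt.comp_hasDerivAt t h1
    have h2 : ∀ i : Fin n, HasDerivAt (fun t => (γ t i)⁻¹ * v i)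
        (-v i / γ t i ^ 2 * v i) t := by
      intro i
      have := ((hγi t i).inv (hne t ht i)).mul_const (v i)
      simpa using this
    have h3 := HasDerivAt.fun_sum (fun i (_ : i ∈ Finset.univ) => h2 i)
    exact h1'.sub (h3.const_mul μ)
  have hψ''nonneg : ∀ t ∈ Icc (0:ℝ) 1, 0 ≤ ψ'' t := by
    intro t ht
    have h1 := hpsd _ (hγs t ht) v
    have h2 : ∑ i, -v i / γ t i ^ 2 * v i ≤ 0 := by
      apply Finset.sum_nonpos
      intro i _
      have : -v i / γ t i ^ 2 * v i = -(v i ^ 2 / γ t i ^ 2) := by ring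
      rw [this]
      exact neg_nonpos.mpr (by positivity)
    have := mul_nonneg hμ (neg_nonneg.mpr h2)
    simp only [hψ''def]
    nlinarith
  have hψ'0 : ψ' 0 = 0 := by
    have h1 : fderiv ℝ f y₀ v = ⟪gradient f y₀, v⟫_ℝ := by
      rw [gradient, toDual_symm_apply]
    simp only [hψ'def, hγ0, h1, hcrit]
    rw [real_inner_smul_left]
    rw [show ⟪invVec y₀, v⟫_ℝ = ∑ i, invVec y₀ i * v i by simp [PiLp.inner_apply, mul_comm]]
    simp [invVec]
  have hmono' : MonotoneOn ψ' (Icc (0:ℝ) 1) := by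
    apply monotoneOn_of_deriv_nonneg (convex_Icc 0 1)
    · exact fun t ht => (hψ'd t ht).continuousAt.continuousWithinAt
    · intro t ht
      rw [interior_Icc] at ht
      exact (hψ'd t (Ioo_subset_Icc_self ht)).differentiableAt.differentiableWithinAt
    · intro t ht
      rw [interior_Icc] at ht
      rw [(hψ'd t (Ioo_subset_Icc_self ht)).deriv]
      exact hψ''nonneg t (Ioo_subset_Icc_self ht)
  have hψ'nonneg : ∀ t ∈ Icc (0:ℝ) 1, 0 ≤ ψ' t := by
    intro t ht
    have := hmono' (left_mem_Icc.mpr zero_le_one) ht ht.1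
    rwa [hψ'0] at this
  have hmono : MonotoneOn ψ (Icc (0:ℝ) 1) := by
    apply monotoneOn_of_deriv_nonneg (convex_Icc 0 1)
    · exact fun t ht => (hψd t ht).continuousAt.continuousWithinAt
    · intro t ht
      rw [interior_Icc] at ht
      exact (hψd t (Ioo_subset_Icc_self ht)).differentiableAt.differentiableWithinAt
    · intro t ht
      rw [interior_Icc] at ht
      rw [(hψd t (Ioo_subset_Icc_self ht)).deriv]
      exact hψ'nonneg t (Ioo_subset_Icc_self ht)
  have := hmono (left_mem_Icc.mpr zero_le_one) (right_mem_Icc.mpr zero_le_one) zero_le_one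
  simpa [hψdef, hγ0, hγ1] using this

set_option maxHeartbeats 1000000 in
lemma inverse_setup (f : EuclideanSpace ℝ (Fin n) → ℝ) (hf : ContDiff ℝ 2 f)
    (xstar : EuclideanSpace ℝ (Fin n)) (hxstar : ∀ i, 0 < xstar i)
    (hgrad : gradient f xstar = 0)
    (hpd : ∀ p : EuclideanSpace ℝ (Fin n), p ≠ 0 → 0 < fderiv ℝ (fderiv ℝ f) xstar p p) :
    ∃ Ψ : ℝ × EuclideanSpace ℝ (Fin n) → ℝ × EuclideanSpace ℝ (Fin n),
      ContDiffAt ℝ 1 Ψ (0, 0) ∧ Ψ (0, 0) = (0, xstar) ∧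
      (∀ᶠ z in 𝓝 ((0:ℝ), (0:EuclideanSpace ℝ (Fin n))),
        (Ψ z).1 = z.1 ∧ gradient f (Ψ z).2 - (Ψ z).1 • invVec (Ψ z).2 = z.2) := by
  have hgradC1 : ContDiff ℝ 1 (gradient f) :=
    (toDual ℝ (EuclideanSpace ℝ (Fin n))).symm.contDiff.comp
      (hf.fderiv_right (m := 1) (by norm_num))
  set Φ : ℝ × EuclideanSpace ℝ (Fin n) → ℝ × EuclideanSpace ℝ (Fin n) :=
    fun p => (p.1, gradient f p.2 - p.1 • invVec p.2) with hΦdef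
  have hΦc : ContDiffAt ℝ 1 Φ (0, xstar) := by
    apply ContDiffAt.prodMk contDiffAt_fst
    apply ContDiffAt.sub
    · exact (hgradC1.contDiffAt).comp _ contDiffAt_snd
    · have hinv2 : ContDiffAt ℝ 1 (fun p : ℝ × EuclideanSpace ℝ (Fin n) => invVec p.2)
          ((0:ℝ), xstar) := by
        have := (invVec_contDiffAt xstar (fun i => (hxstar i).ne')).comp ((0:ℝ), xstar)
          (contDiffAt_snd (𝕜 := ℝ) (p := ((0:ℝ), xstar)))
        exact this
      exact contDiffAt_fst.smul hinv2
  set D : EuclideanSpace ℝ (Fin n) →L[ℝ] EuclideanSpace ℝ (Fin n) :=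
    fderiv ℝ (gradient f) xstar with hD
  have hDfd : HasFDerivAt (gradient f) D xstar :=
    (hgradC1.differentiable one_ne_zero xstar).hasFDerivAt
  have hDinner : ∀ w u : EuclideanSpace ℝ (Fin n),
      ⟪w, D u⟫_ℝ = fderiv ℝ (fderiv ℝ f) xstar u w := by
    intro w u
    have hfun : (fun y => ⟪w, gradient f y⟫_ℝ) = fun y => fderiv ℝ f y w := by
      funext y
      rw [real_inner_comm, gradient, toDual_symm_apply]
    have h1 : HasFDerivAt (fun y => ⟪w, gradient f y⟫_ℝ)
        ((innerSL ℝ w).comp D) xstar := (innerSL ℝ w).hasFDerivAt.comp xstar hDfd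
    have h2 : HasFDerivAt (fun y => fderiv ℝ f y w)
        ((ContinuousLinearMap.apply ℝ ℝ w).comp (fderiv ℝ (fderiv ℝ f) xstar)) xstar :=
      (ContinuousLinearMap.apply ℝ ℝ w).hasFDerivAt.comp xstar
        (((hf.fderiv_right (m := 1) (by norm_num)).differentiable one_ne_zero) xstar).hasFDerivAt
    rw [hfun] at h1
    have h3 := h1.unique h2
    have h4 := congrFun (congrArg (fun (L : EuclideanSpace ℝ (Fin n) →L[ℝ] ℝ)
      => (L : EuclideanSpace ℝ (Fin n) → ℝ)) h3) u
    simpa using h4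
  have hDinj : Function.Injective D := by
    rw [injective_iff_map_eq_zero]
    intro u hu
    by_contra hne
    have hlt := hpd u hne
    rw [← hDinner u u, hu] at hlt
    simp at hlt
  set L₀ : (ℝ × EuclideanSpace ℝ (Fin n)) →L[ℝ] (ℝ × EuclideanSpace ℝ (Fin n)) :=
    (ContinuousLinearMap.fst ℝ ℝ (EuclideanSpace ℝ (Fin n))).prod
      ((D.comp (ContinuousLinearMap.snd ℝ ℝ (EuclideanSpace ℝ (Fin n)))) -
        (ContinuousLinearMap.fst ℝ ℝ (EuclideanSpace ℝ (Fin n))).smulRight (invVec xstar))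
    with hL₀
  have hΦfd : HasFDerivAt Φ L₀ (0, xstar) := by
    apply HasFDerivAt.prodMk
    · exact hasFDerivAt_fst
    · have h1 : HasFDerivAt (fun p : ℝ × EuclideanSpace ℝ (Fin n) => gradient f p.2)
          (D.comp (ContinuousLinearMap.snd ℝ ℝ (EuclideanSpace ℝ (Fin n)))) (0, xstar) :=
        by have := hDfd.comp ((0:ℝ), xstar) (hasFDerivAt_snd (𝕜 := ℝ) (p := ((0:ℝ), xstar))); exact this
      have hinvfd : HasFDerivAt (invVec (n := n)) (fderiv ℝ (invVec (n := n)) xstar) xstar :=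
        ((invVec_contDiffAt xstar (fun i => (hxstar i).ne')).differentiableAt
          one_ne_zero).hasFDerivAt
      have h2' := hasFDerivAt_fst.smul
        (hinvfd.comp ((0:ℝ), xstar) (hasFDerivAt_snd (𝕜 := ℝ) (p := ((0:ℝ), xstar))))
      have h2 : HasFDerivAt (fun p : ℝ × EuclideanSpace ℝ (Fin n) => p.1 • invVec p.2)
          ((ContinuousLinearMap.fst ℝ ℝ (EuclideanSpace ℝ (Fin n))).smulRight (invVec xstar))
          (0, xstar) := by
        have h3 := h2'
        simp at h3
        exact h3
      exact h1.sub h2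
  have hL₀inj : Function.Injective L₀ := by
    rw [injective_iff_map_eq_zero]
    rintro ⟨a, u⟩ h
    rw [Prod.ext_iff] at h
    obtain ⟨h1, h2⟩ := h
    have ha : a = 0 := h1
    simp only [hL₀, ContinuousLinearMap.prod_apply, ContinuousLinearMap.coe_sub',
      Pi.sub_apply, ContinuousLinearMap.coe_comp', Function.comp_apply,
      ContinuousLinearMap.coe_snd', ContinuousLinearMap.smulRight_apply,
      ContinuousLinearMap.coe_fst'] at h2
    rw [ha, zero_smul, sub_zero] at h2
    have hu : u = 0 := hDinj (by simpa using h2)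
    rw [Prod.ext_iff]
    exact ⟨ha, hu⟩
  set A : (ℝ × EuclideanSpace ℝ (Fin n)) ≃L[ℝ] (ℝ × EuclideanSpace ℝ (Fin n)) :=
    (LinearMap.linearEquivOfInjective L₀.toLinearMap hL₀inj rfl).toContinuousLinearEquiv
    with hA
  have hAz : ∀ z, A z = L₀ z := by
    intro z
    rw [hA]
    rfl
  have hAcoe : (A : (ℝ × EuclideanSpace ℝ (Fin n)) →L[ℝ] (ℝ × EuclideanSpace ℝ (Fin n))) = L₀ :=
    ContinuousLinearMap.ext hAz
  have hΦfdA : HasFDerivAt Φ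
      (A : (ℝ × EuclideanSpace ℝ (Fin n)) →L[ℝ] (ℝ × EuclideanSpace ℝ (Fin n))) (0, xstar) := by
    rw [hAcoe]; exact hΦfd
  have hstrict : HasStrictFDerivAt Φ
      (A : (ℝ × EuclideanSpace ℝ (Fin n)) →L[ℝ] (ℝ × EuclideanSpace ℝ (Fin n))) (0, xstar) :=
    hΦc.hasStrictFDerivAt' hΦfdA one_ne_zero
  set Ψ := hstrict.localInverse Φ A (0, xstar) with hΨ
  have hΦ0 : Φ (0, xstar) = (0, 0) := by
    simp [hΦdef, hgrad]
  refine ⟨Ψ, ?_, ?_, ?_⟩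
  · have h := hΦc.to_localInverse hΦfdA one_ne_zero
    rw [hΦ0] at h
    exact h
  · have h := hstrict.localInverse_apply_image
    rwa [hΦ0] at h
  · have hR := hstrict.eventually_right_inverse
    rw [hΦ0] at hR
    apply hR.mono
    intro z hz
    rw [← hΨ] at hz
    have hz1 : (Φ (Ψ z)).1 = z.1 := by rw [hz]
    have hz2 : (Φ (Ψ z)).2 = z.2 := by rw [hz]
    refine ⟨hz1, ?_⟩
    simpa [hΦdef] using hz2

end Aux

/-- For the bound constraint `x ≥ 0`: if `x* > 0` is a stationary point of `f`
with positive definite Hessian, then there is a continuously differentiable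
path `μ ↦ x(μ)` of positive unconstrained local minimizers of `B_μ`, defined
for small `μ > 0`, with `∇B_μ(x(μ)) = 0` and `x(μ) → x*` as `μ → 0⁺`. -/
theorem barrier_bound_constraint_trajectory
    (n : ℕ)
    (f : EuclideanSpace ℝ (Fin n) → ℝ)
    (hf : ContDiff ℝ 2 f)
    (xstar : EuclideanSpace ℝ (Fin n))
    (hxstar : ∀ i, 0 < xstar i)
    (hgrad : gradient f xstar = 0)
    (hhess : ∀ p : EuclideanSpace ℝ (Fin n), p ≠ 0 →
      0 < iteratedFDeriv ℝ 2 f xstar ![p, p])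
    -- the logarithmic barrier function for the constraint x ≥ 0
    (B : ℝ → EuclideanSpace ℝ (Fin n) → ℝ)
    (hB : B = fun μ x => f x - μ * ∑ i, Real.log (x i)) :
    ∃ μbar : ℝ, 0 < μbar ∧ ∃ X : ℝ → EuclideanSpace ℝ (Fin n),
      ContDiffOn ℝ 1 X (Ioo 0 μbar) ∧
      (∀ μ ∈ Ioo (0 : ℝ) μbar, (∀ i, 0 < X μ i) ∧
        gradient (B μ) (X μ) = 0 ∧ IsLocalMin (B μ) (X μ)) ∧
      Tendsto X (𝓝[>] 0) (𝓝 xstar) := by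
  subst hB
  have hpd : ∀ p : EuclideanSpace ℝ (Fin n), p ≠ 0 →
      0 < fderiv ℝ (fderiv ℝ f) xstar p p := by
    intro p hp
    have := hhess p hp
    rwa [iteratedFDeriv_two_apply, show (![p,p] : Fin 2 → _) 0 = p from rfl,
      show (![p,p] : Fin 2 → _) 1 = p from rfl] at this
  obtain ⟨r, hrpos, hrball⟩ :=
    exists_psd_ball f hf xstar hxstar (exists_coercive f xstar hhess)
  obtain ⟨Ψ, hΨc, hΨ0, hΨright⟩ := inverse_setup f hf xstar hxstar hgrad hpd
  -- a neighborhood on which Ψ is C¹ and is a right inverse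
  obtain ⟨U, hUnhds, hΨCD⟩ := hΨc.contDiffOn le_rfl (by simp)
  have hV : U ∩ {z | (Ψ z).1 = z.1 ∧
      gradient f (Ψ z).2 - (Ψ z).1 • invVec (Ψ z).2 = z.2}
      ∈ 𝓝 ((0:ℝ), (0:EuclideanSpace ℝ (Fin n))) :=
    Filter.inter_mem hUnhds hΨright
  obtain ⟨W, hWsub, hWopen, hW0⟩ := mem_nhds_iff.mp hV
  -- the path
  set X : ℝ → EuclideanSpace ℝ (Fin n) := fun μ => (Ψ (μ, 0)).2 with hX
  have hmcont : Continuous (fun μ : ℝ => ((μ, 0) : ℝ × EuclideanSpace ℝ (Fin n))) :=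
    continuous_id.prodMk continuous_const
  have hΨm : ContinuousAt (fun μ : ℝ => Ψ (μ, 0)) 0 :=
    hΨc.continuousAt.comp (x := (0:ℝ)) hmcont.continuousAt
  have hXcont : ContinuousAt X 0 := continuous_snd.continuousAt.comp hΨm
  have hX0 : X 0 = xstar := by
    show (Ψ ((0:ℝ), (0:EuclideanSpace ℝ (Fin n)))).2 = xstar
    rw [hΨ0]
  have hev : ∀ᶠ μ in 𝓝 (0:ℝ), ((μ, 0) : ℝ × EuclideanSpace ℝ (Fin n)) ∈ W
      ∧ X μ ∈ Metric.ball xstar r := by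
    have e1 : ∀ᶠ μ in 𝓝 (0:ℝ), ((μ, 0) : ℝ × EuclideanSpace ℝ (Fin n)) ∈ W :=
      hmcont.continuousAt.preimage_mem_nhds (hWopen.mem_nhds hW0)
    have e2 : ∀ᶠ μ in 𝓝 (0:ℝ), X μ ∈ Metric.ball xstar r := by
      apply hXcont.preimage_mem_nhds
      rw [hX0]
      exact Metric.ball_mem_nhds _ hrpos
    exact e1.and e2
  obtain ⟨μbar, hμbarpos, hμbar⟩ := Metric.eventually_nhds_iff.mp hev
  have hIoo : ∀ μ ∈ Ioo (0:ℝ) μbar,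
      ((μ, 0) : ℝ × EuclideanSpace ℝ (Fin n)) ∈ W ∧ X μ ∈ Metric.ball xstar r := by
    intro μ hμ
    apply hμbar
    rw [Real.dist_eq, sub_zero, abs_of_pos hμ.1]
    exact hμ.2
  refine ⟨μbar, hμbarpos, X, ?_, ?_, ?_⟩
  · -- ContDiffOn
    have hmCD : ContDiff ℝ 1 (fun μ : ℝ => ((μ, 0) : ℝ × EuclideanSpace ℝ (Fin n))) :=
      contDiff_id.prodMk contDiff_const
    have hcomp : ContDiffOn ℝ 1 (fun μ => Ψ (μ, 0)) (Ioo 0 μbar) := by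
      apply (hΨCD.mono (fun z hz => (hWsub hz).1)).comp hmCD.contDiffOn
      intro μ hμ
      exact (hIoo μ hμ).1
    exact contDiff_snd.comp_contDiffOn hcomp
  · -- the properties at each μ
    intro μ hμ
    obtain ⟨hμW, hμball⟩ := hIoo μ hμ
    obtain ⟨hz1, hz2⟩ := (hWsub hμW).2
    have hXpos : ∀ i, 0 < X μ i := (hrball _ hμball).1
    have hcrit : gradient f (X μ) = μ • invVec (X μ) := by
      have h2 : gradient f (X μ) - μ • invVec (X μ) = 0 := by
        have h2' := hz2
        rw [hz1] at h2'
        rw [hX]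
        simpa using h2'
      exact sub_eq_zero.mp h2
    refine ⟨hXpos, ?_, ?_⟩
    · show gradient (fun x => f x - μ * ∑ i, Real.log (x i)) (X μ) = 0
      rw [gradient_barrier f μ (X μ) (hf.differentiable (by norm_num) (X μ))
        (fun i => (hXpos i).ne')]
      rw [hcrit]
      simp
    · have hmin := isMinOn_barrier f hf μ (le_of_lt hμ.1) (Metric.ball xstar r)
        (convex_ball _ _) (fun y hy => (hrball y hy).1) (fun y hy => (hrball y hy).2)
        (X μ) hμball hcrit
      exact hmin.isLocalMin (Metric.isOpen_ball.mem_nhds hμball)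
  · -- tendsto
    have := hXcont.tendsto
    rw [hX0] at this
    exact this.mono_left nhdsWithin_le_nhds
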